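/- Let F be a functional summary into functions on a compact metric space T, uniformly bounded (sup_{f∈im F} sup_{s∈T} |f(s)| ≤ U < ∞) with equicontinuous image, and let D₁, D₂, … be persistence diagrams sampled i.i.d. from a probability measure on the space of diagrams. Set f_i := F(D_i). Then almost surely sup_{s∈T} | (1/m) ∑_{i=1}^m f_i(s) − E[F(D)(s)] | → 0 as m → ∞. -/

import Mathlib

open MeasureTheory Filter

/-- Uniform strong law of large numbers for functional summaries: if `F` is uniformly
bounded with equicontinuous image and `D₁, D₂, …` are i.i.d. random persistence diagrams
with law `Q`, then almost surely
`sup_{s∈T} |(1/m) ∑_{i<m} F(D_i)(s) − E[F(D)(s)]| → 0`. -/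
theorem stmt17 {𝒟 : Type*} [MeasurableSpace 𝒟]
    {T : Type*} [MetricSpace T] [CompactSpace T] [Nonempty T]
    {Ω : Type*} [MeasurableSpace Ω] (P : Measure Ω) [IsProbabilityMeasure P]
    (Q : Measure 𝒟) [IsProbabilityMeasure Q]
    (F : 𝒟 → T → ℝ) (U : ℝ)
    (hbound : ∀ d s, |F d s| ≤ U)
    (hequi : Equicontinuous F)
    (hFmeas : ∀ s : T, Measurable fun d => F d s)
    (D : ℕ → Ω → 𝒟) (hDmeas : ∀ i, Measurable (D i))
    (hlaw : ∀ i, Measure.map (D i) P = Q)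
    (hindep : ProbabilityTheory.iIndepFun (m := fun _ : ℕ => ‹MeasurableSpace 𝒟›) D P) :
    ∀ᵐ ω ∂P, Tendsto
      (fun m : ℕ => ⨆ s : T,
        |(1 / (m : ℝ)) * ∑ i ∈ Finset.range m, F (D i ω) s - ∫ d, F d s ∂Q|)
      atTop (nhds 0) := by
  -- abbreviations
  set g : T → ℝ := fun s => ∫ d, F d s ∂Q with hg
  -- integrability of F · s over Q
  have hQint : ∀ s : T, Integrable (fun d => F d s) Q := fun s =>
    (integrable_const U).mono' (hFmeas s).aestronglyMeasurable
      (ae_of_all _ fun d => by simpa [Real.norm_eq_abs] using hbound d s)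
  -- pointwise SLLN at each point t
  have key : ∀ t : T, ∀ᵐ ω ∂P, Tendsto
      (fun m : ℕ => (1 / (m : ℝ)) * ∑ i ∈ Finset.range m, F (D i ω) t)
      atTop (nhds (g t)) := by
    intro t
    set X : ℕ → Ω → ℝ := fun i ω => F (D i ω) t with hX
    have hXmeas : ∀ i, Measurable (X i) := fun i => (hFmeas t).comp (hDmeas i)
    have hXint : Integrable (X 0) P :=
      (integrable_const U).mono' (hXmeas 0).aestronglyMeasurable
        (ae_of_all _ fun ω => by simpa [Real.norm_eq_abs] using hbound (D 0 ω) t)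
    have hXindep : Pairwise (Function.onFun (ProbabilityTheory.IndepFun · · P) X) := by
      intro i j hij
      exact (hindep.indepFun hij).comp (hFmeas t) (hFmeas t)
    have hXident : ∀ i, ProbabilityTheory.IdentDistrib (X i) (X 0) P P := by
      intro i
      have hD : ProbabilityTheory.IdentDistrib (D i) (D 0) P P :=
        ⟨(hDmeas i).aemeasurable, (hDmeas 0).aemeasurable, by rw [hlaw i, hlaw 0]⟩
      exact hD.comp (hFmeas t)
    have hexp : (∫ ω, X 0 ω ∂P) = g t := by
      have h1 : g t = ∫ y, F y t ∂(Measure.map (D 0) P) := by rw [hlaw 0]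
      rw [h1, integral_map (hDmeas 0).aemeasurable (hFmeas t).aestronglyMeasurable]
    have h := ProbabilityTheory.strong_law_ae_real X hXint hXindep hXident
    filter_upwards [h] with ω hω
    rw [hexp] at hω
    convert hω using 2 with m
    rw [one_div_mul_eq_div]
  -- separable: dense sequence
  have hNe : Nonempty 𝒟 := by
    by_contra h
    rw [not_nonempty_iff] at h
    have := IsProbabilityMeasure.ne_zero Q
    exact this (by simp [Measure.eq_zero_of_isEmpty])
  obtain ⟨u, hu⟩ := TopologicalSpace.exists_dense_seq T
  have hae : ∀ᵐ ω ∂P, ∀ n : ℕ, Tendsto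
      (fun m : ℕ => (1 / (m : ℝ)) * ∑ i ∈ Finset.range m, F (D i ω) (u n))
      atTop (nhds (g (u n))) := ae_all_iff.2 fun n => key (u n)
  filter_upwards [hae] with ω hω
  -- now fix ω and show uniform convergence of averages
  set A : ℕ → T → ℝ := fun m s => (1 / (m : ℝ)) * ∑ i ∈ Finset.range m, F (D i ω) s with hA
  rw [Metric.tendsto_atTop]
  intro ε hε
  have hε4 : 0 < ε / 4 := by linarith
  -- uniform equicontinuity
  have huec : UniformEquicontinuous F :=
    CompactSpace.uniformEquicontinuous_of_equicontinuous hequi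
  obtain ⟨δ, hδpos, hδ⟩ := Metric.uniformEquicontinuous_iff.1 huec (ε / 4) hε4
  -- finite subcover by balls around dense points
  have hcover : (Set.univ : Set T) ⊆ ⋃ n : ℕ, Metric.ball (u n) δ := by
    intro s _
    obtain ⟨t, hts⟩ := Metric.denseRange_iff.1 hu s δ hδpos
    exact Set.mem_iUnion.2 ⟨t, by simpa [Metric.mem_ball] using hts⟩
  obtain ⟨I, hI⟩ := isCompact_univ.elim_finite_subcover
    (fun n : ℕ => Metric.ball (u n) δ) (fun n => Metric.isOpen_ball) hcover
  -- eventually all centers are ε/4-close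
  have hev : ∀ᶠ m : ℕ in atTop, ∀ n ∈ I, |A m (u n) - g (u n)| < ε / 4 := by
    rw [eventually_all_finset]
    intro n _
    obtain ⟨N, hN⟩ := Metric.tendsto_atTop.1 (hω n) (ε / 4) hε4
    refine eventually_atTop.2 ⟨N, fun m hm => ?_⟩
    have h := hN m hm
    rw [Real.dist_eq] at h
    exact h
  -- continuity bound on g
  have hgbound : ∀ s t : T, dist s t < δ → |g s - g t| ≤ ε / 4 := by
    intro s t hst
    have : g s - g t = ∫ d, (F d s - F d t) ∂Q := by
      rw [integral_sub (hQint s) (hQint t)]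
    rw [this]
    have := norm_integral_le_of_norm_le_const (μ := Q)
      (f := fun d => F d s - F d t) (C := ε / 4)
      (ae_of_all _ fun d => by
        have := hδ s t hst d
        rw [Real.dist_eq] at this
        simpa [Real.norm_eq_abs] using this.le)
    simpa [Real.norm_eq_abs] using this
  -- average equicontinuity bound
  have hAbound : ∀ m : ℕ, ∀ s t : T, dist s t < δ → |A m s - A m t| ≤ ε / 4 := by
    intro m s t hst
    have h1 : A m s - A m t
        = (1 / (m : ℝ)) * ∑ i ∈ Finset.range m, (F (D i ω) s - F (D i ω) t) := by
      rw [Finset.sum_sub_distrib, mul_sub]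
    rw [h1, abs_mul, abs_of_nonneg (by positivity : (0:ℝ) ≤ 1 / (m : ℝ))]
    have h2 : |∑ i ∈ Finset.range m, (F (D i ω) s - F (D i ω) t)|
        ≤ (m : ℝ) * (ε / 4) := by
      calc |∑ i ∈ Finset.range m, (F (D i ω) s - F (D i ω) t)|
          ≤ ∑ i ∈ Finset.range m, |F (D i ω) s - F (D i ω) t| :=
            Finset.abs_sum_le_sum_abs _ _
        _ ≤ ∑ _i ∈ Finset.range m, (ε / 4) := by
            refine Finset.sum_le_sum fun i _ => ?_
            have := hδ s t hst (D i ω)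
            rw [Real.dist_eq] at this
            exact this.le
        _ = (m : ℝ) * (ε / 4) := by simp [mul_comm]
    calc (1 / (m : ℝ)) * |∑ i ∈ Finset.range m, (F (D i ω) s - F (D i ω) t)|
        ≤ (1 / (m : ℝ)) * ((m : ℝ) * (ε / 4)) := by
          exact mul_le_mul_of_nonneg_left h2 (by positivity)
      _ = ((1 / (m : ℝ)) * (m : ℝ)) * (ε / 4) := by ring
      _ ≤ 1 * (ε / 4) := by
          refine mul_le_mul_of_nonneg_right ?_ hε4.le
          rcases Nat.eq_zero_or_pos m with h | h
          · simp [h]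
          · rw [one_div_mul_cancel (by exact_mod_cast h.ne' : (m : ℝ) ≠ 0)]
      _ = ε / 4 := one_mul _
  obtain ⟨N, hN⟩ := eventually_atTop.1 hev
  refine ⟨N, fun m hm => ?_⟩
  -- bound the sup
  have hsup : ∀ s : T, |A m s - g s| ≤ 3 * (ε / 4) := by
    intro s
    obtain ⟨n, hnI, hns⟩ : ∃ n ∈ I, s ∈ Metric.ball (u n) δ := by
      have := hI (Set.mem_univ s)
      simpa using this
    rw [Metric.mem_ball] at hns
    calc |A m s - g s|
        ≤ |A m s - A m (u n)| + |A m (u n) - g (u n)| + |g (u n) - g s| := by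
          have := abs_sub_le (A m s) (A m (u n)) (g s)
          have h2 := abs_sub_le (A m (u n)) (g (u n)) (g s)
          linarith [abs_sub_le (A m s) (A m (u n)) (g s),
            abs_sub_le (A m (u n)) (g (u n)) (g s)]
      _ ≤ ε / 4 + ε / 4 + ε / 4 := by
          refine add_le_add (add_le_add (hAbound m s (u n) hns)
            (hN m hm n hnI).le) (hgbound (u n) s (by rwa [dist_comm] at hns))
      _ = 3 * (ε / 4) := by ring
  have hsup' : (⨆ s : T, |A m s - g s|) ≤ 3 * (ε / 4) :=
    ciSup_le fun s => hsup s
  have hsupnn : 0 ≤ ⨆ s : T, |A m s - g s| :=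
    Real.iSup_nonneg fun s => abs_nonneg _
  rw [Real.dist_eq, sub_zero, abs_of_nonneg hsupnn]
  calc (⨆ s : T, |A m s - g s|) ≤ 3 * (ε / 4) := hsup'
    _ < ε := by linarith
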